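/- Let R be a Noetherian ring of prime characteristic p and c ∈ R. For e ≥ 1, if the map θ_{e,c} : R → {}^e R sending 1 to {}^e c is pure, then θ_{e+1,c} : R → {}^{e+1} R sending 1 to {}^{e+1} c is also pure. -/

import Mathlib

/-!
STATEMENT 15.  `R` Noetherian of prime characteristic `p`, `c ∈ R`, `e ≥ 1`.
If `θ_{e,c} : R → ᵉR`, `1 ↦ ᵉc`, is pure, then `θ_{e+1,c} : R → ᵉ⁺¹R`,
`1 ↦ ᵉ⁺¹c`, is pure.
-/

open scoped TensorProduct

universe u

/-- `FrobTwist R p e` is `R` viewed as an `R`-module via the `e`-th iterate of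
the Frobenius endomorphism (the paper's `ᵉR`). -/
def FrobTwist (R : Type u) (p e : ℕ) : Type u := R

instance (R : Type u) [CommRing R] (p e : ℕ) : CommRing (FrobTwist R p e) :=
  inferInstanceAs (CommRing R)

noncomputable instance (R : Type u) [CommRing R] (p e : ℕ) [Fact p.Prime] [CharP R p] :
    Module R (FrobTwist R p e) :=
  Module.compHom R (iterateFrobenius R p e)

/-- The `R`-linear map `θ_{e,c} : R → ᵉR` with `1 ↦ ᵉc`. -/
noncomputable def thetaMap (R : Type u) [CommRing R] (p e : ℕ) [Fact p.Prime] [CharP R p]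
    (c : R) : R →ₗ[R] FrobTwist R p e where
  toFun r := (iterateFrobenius R p e r * c : R)
  map_add' a b := by
    show iterateFrobenius R p e (a + b) * c = iterateFrobenius R p e a * c + iterateFrobenius R p e b * c
    rw [map_add, add_mul]
  map_smul' r x := by
    show iterateFrobenius R p e (r * x) * c = iterateFrobenius R p e r * (iterateFrobenius R p e x * c)
    rw [map_mul, mul_assoc]

/-- A map of `R`-modules is pure if it stays injective after tensoring with
every `R`-module. -/
def IsPureMap {R : Type u} [CommRing R] {M N : Type u}
    [AddCommGroup M] [AddCommGroup N] [Module R M] [Module R N]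
    (f : M →ₗ[R] N) : Prop :=
  ∀ (V : Type u) [AddCommGroup V] [Module R V],
    Function.Injective (LinearMap.lTensor V f)

/-- The purity exponent `𝔢_c ∈ ℕ ∪ {∞}`: the least `e` such that `θ_{e',c}` is
pure for all `e' ≥ e` (and `∞` if there is no such `e`). -/
noncomputable def purityExponent (R : Type u) [CommRing R] (p : ℕ)
    [Fact p.Prime] [CharP R p] (c : R) : ℕ∞ :=
  sInf {n : ℕ∞ | ∃ e : ℕ, n = (e : ℕ∞) ∧
    ∀ e' : ℕ, e ≤ e' → IsPureMap (thetaMap R p e' c)}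
/-- unwrap a twisted element back to `R`. -/
def FrobTwist.un {R : Type u} {p e : ℕ} (x : FrobTwist R p e) : R := x

/-- view a ring element inside a twist. -/
def FrobTwist.tw {R : Type u} (p e : ℕ) (x : R) : FrobTwist R p e := x

/-- `V ⊗ ¹R`, regarded as an `R`-module through the *right* factor. -/
def WMod (R : Type u) [CommRing R] (p : ℕ) [Fact p.Prime] [CharP R p]
    (V : Type u) [AddCommGroup V] [Module R V] : Type u :=
  V ⊗[R] FrobTwist R p 1

noncomputable section

namespace Step15

variable (R : Type u) [CommRing R] (p : ℕ) [Fact p.Prime] [CharP R p]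

/-- `x ↦ F^k(x) * y` as an `R`-linear map `ᵃR →ₗ[R] ᵏ⁺ᵃR`. -/
def shiftMul (a k : ℕ) (y : R) : FrobTwist R p a →ₗ[R] FrobTwist R p (k + a) where
  toFun x := (iterateFrobenius R p k x.un * y : R)
  map_add' u v := by
    show iterateFrobenius R p k (u.un + v.un) * y =
      iterateFrobenius R p k u.un * y + iterateFrobenius R p k v.un * y
    rw [map_add, add_mul]
  map_smul' s x := by
    show iterateFrobenius R p k (iterateFrobenius R p a s * x.un) * y
       = iterateFrobenius R p (k + a) s * (iterateFrobenius R p k x.un * y)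
    rw [map_mul, iterateFrobenius_add_apply, mul_assoc]

/-- multiplication by a ring element is linear on every twist. -/
def mulTwist (e : ℕ) (r : R) : FrobTwist R p e →ₗ[R] FrobTwist R p e where
  toFun x := (r * x.un : R)
  map_add' u v := mul_add r u.un v.un
  map_smul' s x := by
    show r * (iterateFrobenius R p e s * x.un) = iterateFrobenius R p e s * (r * x.un)
    ring

lemma shiftMul_zero (a k : ℕ) : shiftMul R p a k 0 = 0 :=
  LinearMap.ext fun x => by exact mul_zero _

lemma shiftMul_add (a k : ℕ) (y y' : R) :
    shiftMul R p a k (y + y') = shiftMul R p a k y + shiftMul R p a k y' :=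
  LinearMap.ext fun x => by
    show iterateFrobenius R p k x.un * (y + y')
      = iterateFrobenius R p k x.un * y + iterateFrobenius R p k x.un * y'
    exact mul_add _ _ _

lemma mulTwist_one (e : ℕ) : mulTwist R p e 1 = LinearMap.id :=
  LinearMap.ext fun x => by exact one_mul x.un

lemma mulTwist_mul (e : ℕ) (r s : R) :
    mulTwist R p e (r * s) = (mulTwist R p e r).comp (mulTwist R p e s) :=
  LinearMap.ext fun x => by exact mul_assoc r s x.un

lemma mulTwist_add (e : ℕ) (r s : R) :
    mulTwist R p e (r + s) = mulTwist R p e r + mulTwist R p e s :=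
  LinearMap.ext fun x => by exact add_mul r s x.un

lemma mulTwist_zero (e : ℕ) : mulTwist R p e (0 : R) = 0 :=
  LinearMap.ext fun x => by exact zero_mul x.un

lemma shiftMul_comp_mulTwist (a k : ℕ) (r y : R) :
    (shiftMul R p a k y).comp (mulTwist R p a r)
      = shiftMul R p a k (iterateFrobenius R p k r * y) :=
  LinearMap.ext fun x => by
    show iterateFrobenius R p k (r * x.un) * y
       = iterateFrobenius R p k x.un * (iterateFrobenius R p k r * y)
    rw [map_mul]; ring

variable (V : Type u) [AddCommGroup V] [Module R V]

instance : AddCommGroup (WMod R p V) :=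
  inferInstanceAs (AddCommGroup (V ⊗[R] FrobTwist R p 1))

instance : Module R (WMod R p V) where
  smul r w := LinearMap.lTensor V (mulTwist R p 1 r) w
  one_smul w := by
    show LinearMap.lTensor V (mulTwist R p 1 1) w = w
    rw [mulTwist_one, LinearMap.lTensor_id]; rfl
  mul_smul r s w := by
    show LinearMap.lTensor V (mulTwist R p 1 (r * s)) w
      = LinearMap.lTensor V (mulTwist R p 1 r) (LinearMap.lTensor V (mulTwist R p 1 s) w)
    rw [mulTwist_mul, LinearMap.lTensor_comp]; rfl
  smul_zero r := by
    show LinearMap.lTensor V (mulTwist R p 1 r) 0 = 0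
    exact map_zero _
  smul_add r w w' := by
    show LinearMap.lTensor V (mulTwist R p 1 r) (w + w') = _
    exact map_add _ _ _
  add_smul r s w := by
    show LinearMap.lTensor V (mulTwist R p 1 (r + s)) w
      = LinearMap.lTensor V (mulTwist R p 1 r) w + LinearMap.lTensor V (mulTwist R p 1 s) w
    rw [mulTwist_add, LinearMap.lTensor_add]; rfl
  zero_smul w := by
    show LinearMap.lTensor V (mulTwist R p 1 (0 : R)) w = 0
    rw [mulTwist_zero, LinearMap.lTensor_zero]; rfl

variable (d : ℕ)

/-- `Φ : W ⊗ ᵈ⁺¹R →+ V ⊗ ᵈ⁺²R`, `(v ⊗ x) ⊗ y ↦ v ⊗ (F^{d+1}(x)·y)`. -/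
def phi : (WMod R p V) ⊗[R] FrobTwist R p (d + 1) →+ V ⊗[R] FrobTwist R p (d + 1 + 1) :=
  TensorProduct.liftAddHom
    { toFun := fun w =>
        { toFun := fun y => LinearMap.lTensor V (shiftMul R p 1 (d + 1) y.un) w
          map_zero' := by
            show LinearMap.lTensor V (shiftMul R p 1 (d + 1) (0 : R)) w = 0
            rw [shiftMul_zero, LinearMap.lTensor_zero]; rfl
          map_add' := fun y y' => by
            show LinearMap.lTensor V (shiftMul R p 1 (d + 1) (y.un + y'.un)) w = _
            rw [shiftMul_add, LinearMap.lTensor_add]; rfl }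
      map_zero' := AddMonoidHom.ext fun y =>
        map_zero (LinearMap.lTensor V (shiftMul R p 1 (d + 1) y.un))
      map_add' := fun w w' => AddMonoidHom.ext fun y =>
        map_add (LinearMap.lTensor V (shiftMul R p 1 (d + 1) y.un)) w w' }
    (fun r w y => by
      show LinearMap.lTensor V (shiftMul R p 1 (d + 1) y.un)
          (LinearMap.lTensor V (mulTwist R p 1 r) w)
        = LinearMap.lTensor V
            (shiftMul R p 1 (d + 1) (iterateFrobenius R p (d + 1) r * y.un)) w
      have := LinearMap.lTensor_comp_apply (M := V) (shiftMul R p 1 (d + 1) y.un)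
        (mulTwist R p 1 r) (show V ⊗[R] FrobTwist R p 1 from w)
      rw [shiftMul_comp_mulTwist] at this
      exact this.symm)

lemma phi_tmul (w : WMod R p V) (y : FrobTwist R p (d + 1)) :
    phi R p V d (w ⊗ₜ y) = LinearMap.lTensor V (shiftMul R p 1 (d + 1) y.un) w := rfl

/-- `Ψ : V ⊗ ᵈ⁺²R →+ W ⊗ ᵈ⁺¹R`, `v ⊗ z ↦ (v ⊗ 1) ⊗ z`. -/
def psi : V ⊗[R] FrobTwist R p (d + 1 + 1) →+ (WMod R p V) ⊗[R] FrobTwist R p (d + 1) :=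
  TensorProduct.liftAddHom
    { toFun := fun v =>
        { toFun := fun z =>
            (show WMod R p V from v ⊗ₜ (1 : FrobTwist R p 1)) ⊗ₜ FrobTwist.tw p (d + 1) z.un
          map_zero' := TensorProduct.tmul_zero _ _
          map_add' := fun z z' => TensorProduct.tmul_add _ (FrobTwist.tw p (d + 1) z.un)
            (FrobTwist.tw p (d + 1) z'.un) }
      map_zero' := by
        refine AddMonoidHom.ext fun z => ?_
        show (show WMod R p V from (0 : V) ⊗ₜ (1 : FrobTwist R p 1)) ⊗ₜ
          FrobTwist.tw p (d + 1) z.un = 0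
        rw [show ((0 : V) ⊗ₜ (1 : FrobTwist R p 1) : V ⊗[R] FrobTwist R p 1) = 0 from
          TensorProduct.zero_tmul _ _]
        exact TensorProduct.zero_tmul _ _
      map_add' := fun v v' => by
        refine AddMonoidHom.ext fun z => ?_
        show (show WMod R p V from (v + v') ⊗ₜ (1 : FrobTwist R p 1)) ⊗ₜ
          FrobTwist.tw p (d + 1) z.un = _
        rw [show ((v + v') ⊗ₜ (1 : FrobTwist R p 1) : V ⊗[R] FrobTwist R p 1)
            = v ⊗ₜ 1 + v' ⊗ₜ 1 from TensorProduct.add_tmul _ _ _]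
        exact TensorProduct.add_tmul _ _ _ }
    (fun r v z => by
      show (show WMod R p V from (r • v) ⊗ₜ (1 : FrobTwist R p 1)) ⊗ₜ
          FrobTwist.tw p (d + 1) z.un
        = (show WMod R p V from v ⊗ₜ (1 : FrobTwist R p 1)) ⊗ₜ
          FrobTwist.tw p (d + 1) (r • z).un
      have h1 : (show WMod R p V from (r • v) ⊗ₜ (1 : FrobTwist R p 1))
          = (iterateFrobenius R p 1 r) •
            (show WMod R p V from v ⊗ₜ (1 : FrobTwist R p 1)) := by
        show ((r • v) ⊗ₜ (1 : FrobTwist R p 1) : V ⊗[R] FrobTwist R p 1)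
          = LinearMap.lTensor V (mulTwist R p 1 (iterateFrobenius R p 1 r)) (v ⊗ₜ 1)
        rw [LinearMap.lTensor_tmul, TensorProduct.smul_tmul]
        rfl
      rw [h1, TensorProduct.smul_tmul]
      congr 1
      show iterateFrobenius R p (d + 1) (iterateFrobenius R p 1 r) * z.un
        = iterateFrobenius R p (d + 1 + 1) r * z.un
      rw [← iterateFrobenius_add_apply])

lemma psi_tmul (v : V) (z : FrobTwist R p (d + 1 + 1)) :
    psi R p V d (v ⊗ₜ z) = (show WMod R p V from v ⊗ₜ (1 : FrobTwist R p 1)) ⊗ₜ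
      FrobTwist.tw p (d + 1) z.un := rfl

lemma psi_phi (t : (WMod R p V) ⊗[R] FrobTwist R p (d + 1)) :
    psi R p V d (phi R p V d t) = t := by
  induction t using TensorProduct.induction_on with
  | zero => rw [map_zero, map_zero]
  | add a b ha hb => rw [map_add, map_add, ha, hb]
  | tmul w y =>
    have : ∀ s : V ⊗[R] FrobTwist R p 1,
        psi R p V d (phi R p V d ((show WMod R p V from s) ⊗ₜ y))
          = (show WMod R p V from s) ⊗ₜ y := by
      intro s
      induction s using TensorProduct.induction_on with
      | zero =>
        rw [show ((show WMod R p V from (0 : V ⊗[R] FrobTwist R p 1)) ⊗ₜ y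
              : (WMod R p V) ⊗[R] FrobTwist R p (d + 1)) = 0 from
            TensorProduct.zero_tmul _ y]
        rw [map_zero, map_zero]
      | add a b ha hb =>
        rw [show ((show WMod R p V from a + b) ⊗ₜ y
              : (WMod R p V) ⊗[R] FrobTwist R p (d + 1))
            = (show WMod R p V from a) ⊗ₜ y + (show WMod R p V from b) ⊗ₜ y from
            TensorProduct.add_tmul _ _ y]
        rw [map_add, map_add, ha, hb]
      | tmul v x =>
        rw [phi_tmul, LinearMap.lTensor_tmul, psi_tmul]
        have hx : (show WMod R p V from v ⊗ₜ x)
            = x.un • (show WMod R p V from v ⊗ₜ (1 : FrobTwist R p 1)) := by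
          show (v ⊗ₜ x : V ⊗[R] FrobTwist R p 1)
            = LinearMap.lTensor V (mulTwist R p 1 x.un) (v ⊗ₜ 1)
          rw [LinearMap.lTensor_tmul]
          congr 1
          exact (mul_one x.un).symm
        rw [hx, TensorProduct.smul_tmul]
        rfl
    exact this w

lemma phi_injective : Function.Injective (phi R p V d) :=
  Function.LeftInverse.injective (psi_phi R p V d)

lemma phi_theta (c : R) (w : WMod R p V) :
    phi R p V d (LinearMap.lTensor (WMod R p V) (thetaMap R p (d + 1) c) (w ⊗ₜ (1 : R)))
      = LinearMap.lTensor V (shiftMul R p 1 (d + 1) c) (show V ⊗[R] FrobTwist R p 1 from w) := by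
  rw [LinearMap.lTensor_tmul, phi_tmul]
  have : (thetaMap R p (d + 1) c (1 : R)).un = c := by
    show iterateFrobenius R p (d + 1) 1 * c = c
    rw [map_one, one_mul]
  rw [this]

end Step15

theorem theta_succ_pure_of_theta_pure
    (R : Type u) [CommRing R] [IsNoetherianRing R]
    (p : ℕ) [Fact p.Prime] [CharP R p] (c : R) (e : ℕ) (he : 1 ≤ e)
    (hpure : IsPureMap (thetaMap R p e c)) :
    IsPureMap (thetaMap R p (e + 1) c) := by
  obtain ⟨d, rfl⟩ : ∃ d, e = d + 1 := ⟨e - 1, (Nat.succ_pred_eq_of_pos he).symm⟩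
  intro V _ _
  -- factor `θ_{d+2,c} = shiftMul (d+1) c ∘ θ_{1,1}`
  have hfact : thetaMap R p (d + 1 + 1) c
      = (Step15.shiftMul R p 1 (d + 1) c).comp (thetaMap R p 1 1) := by
    refine LinearMap.ext fun r => ?_
    show iterateFrobenius R p (d + 1 + 1) r * c
      = iterateFrobenius R p (d + 1) (iterateFrobenius R p 1 r * 1) * c
    rw [mul_one, ← iterateFrobenius_add_apply]
  have hfact1 : thetaMap R p (d + 1) c
      = (Step15.shiftMul R p 1 d c).comp (thetaMap R p 1 1) := by
    refine LinearMap.ext fun r => ?_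
    show iterateFrobenius R p (d + 1) r * c
      = iterateFrobenius R p d (iterateFrobenius R p 1 r * 1) * c
    rw [mul_one, ← iterateFrobenius_add_apply]
  -- purity of `θ_{1,1}` after tensoring with `V`
  have hθ11 : Function.Injective (LinearMap.lTensor V (thetaMap R p 1 1)) := by
    have h := hpure V
    rw [hfact1, LinearMap.lTensor_comp, LinearMap.coe_comp] at h
    exact h.of_comp
  -- injectivity of `V ⊗ shiftMul (d+1) c`
  have hh : Function.Injective (LinearMap.lTensor V (Step15.shiftMul R p 1 (d + 1) c)) := by
    have hW := hpure (WMod R p V)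
    intro a b hab
    have key : ∀ t : V ⊗[R] FrobTwist R p 1,
        LinearMap.lTensor V (Step15.shiftMul R p 1 (d + 1) c) t
          = Step15.phi R p V d
              (LinearMap.lTensor (WMod R p V) (thetaMap R p (d + 1) c)
                ((show WMod R p V from t) ⊗ₜ (1 : R))) :=
      fun t => (Step15.phi_theta R p V d c (show WMod R p V from t)).symm
    rw [key a, key b] at hab
    have h2 := Step15.phi_injective R p V d hab
    have h3 := hW h2
    have h4 := congrArg (TensorProduct.rid R (WMod R p V)) h3
    rw [TensorProduct.rid_tmul, TensorProduct.rid_tmul, one_smul, one_smul] at h4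
    exact h4
  rw [hfact, LinearMap.lTensor_comp, LinearMap.coe_comp]
  exact hh.comp hθ11
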